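/- With μ̄ > r > 0, 0 < T̄ < T, and μ̄ > rT/T̄, the value y₀ = y_{0max} = ((μ̄−r)/r)·(e^{(r/μ̄)(μ̄T̄−rT)} − 1)/(e^{(rT/μ̄)(μ̄−r)} − 1) satisfies the periodicity equation [r·ln(e^{r(T−T̄)}) − μ̄·ln((μ̄−r(1+y₀e^{r(T−T̄)}))/(μ̄−r(1+y₀)))]/(r(μ̄−r)) = T̄, i.e., the solution with u ≡ 0 is T-periodic. -/

import Mathlib

/-- The value y₀ = y_{0max} satisfies the periodicity equation: the solution
with u ≡ 0 is T-periodic. -/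
theorem y0max_satisfies_periodicity
    (μ r Tbar T : ℝ) (hr : 0 < r) (hμ : r < μ) (hTbar : 0 < Tbar) (hT : Tbar < T)
    (hμT : r * T / Tbar < μ)
    (y₀ : ℝ)
    (hy₀ : y₀ = ((μ - r) / r) *
        (Real.exp ((r / μ) * (μ * Tbar - r * T)) - 1) /
        (Real.exp ((r * T / μ) * (μ - r)) - 1)) :
    (r * Real.log (Real.exp (r * (T - Tbar)))
        - μ * Real.log ((μ - r * (1 + y₀ * Real.exp (r * (T - Tbar))))
            / (μ - r * (1 + y₀))))
      / (r * (μ - r)) = Tbar := by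
  have hμ0 : 0 < μ := lt_trans hr hμ
  set A := Real.exp ((r / μ) * (μ * Tbar - r * T)) with hAdef
  set B := Real.exp ((r * T / μ) * (μ - r)) with hBdef
  set E := Real.exp (r * (T - Tbar)) with hEdef
  have hrT : r * T < μ * Tbar := by
    have := (div_lt_iff₀ hTbar).mp hμT
    linarith
  have hA1 : 1 < A := by
    rw [hAdef, ← Real.exp_zero]
    apply Real.exp_lt_exp.mpr
    apply mul_pos (div_pos hr hμ0); linarith
  have hB1 : 1 < B := by
    rw [hBdef, ← Real.exp_zero]
    apply Real.exp_lt_exp.mpr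
    apply mul_pos (div_pos (mul_pos hr (by nlinarith : (0:ℝ) < T)) hμ0)
    linarith
  have hE1 : 1 < E := by
    rw [hEdef, ← Real.exp_zero]
    apply Real.exp_lt_exp.mpr
    apply mul_pos hr; linarith
  have hEA : E * A = B := by
    rw [hEdef, hAdef, hBdef, ← Real.exp_add]
    congr 1
    field_simp
    ring
  have hB1ne : B - 1 ≠ 0 := by linarith
  have hrne : r ≠ 0 := ne_of_gt hr
  have hμrne : μ - r ≠ 0 := by linarith
  have hN2 : μ - r * (1 + y₀) = (μ - r) * (B - A) / (B - 1) := by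
    rw [hy₀]; field_simp; ring
  have hN1 : μ - r * (1 + y₀ * E) = (μ - r) * (E - 1) / (B - 1) := by
    rw [hy₀]; field_simp
    linear_combination (r - μ) * hEA
  have hBA : 0 < B - A := by nlinarith
  have hN2pos : 0 < μ - r * (1 + y₀) := by
    rw [hN2]
    apply div_pos (mul_pos (by linarith) hBA) (by linarith)
  have hN1pos : 0 < μ - r * (1 + y₀ * E) := by
    rw [hN1]
    apply div_pos _ (by linarith)
    apply mul_pos (by linarith) (by linarith)
  have hratio : (μ - r * (1 + y₀ * E)) / (μ - r * (1 + y₀)) = A⁻¹ := by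
    have hAne : A ≠ 0 := by positivity
    rw [hN1, hN2]
    field_simp
    linear_combination hEA
  rw [hratio, hEdef, Real.log_exp, Real.log_inv, hAdef, Real.log_exp]
  field_simp
  ring
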